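/- Monotonicity of the star-NE conditions in i: for fixed a, b, l > 0, s ≥ 0 with a/H_n^s ≤ l and b/H_n^s ≤ l and H_n^s ≤ 2, if the inequality b·(i/2)·(H_n^s − 1 − 1/2^s)/H_n^s + a·(H_{i+1}^s − 2)/H_n^s ≤ l·(i−1) holds for i = n−1, then it holds for all 2 ≤ i ≤ n−1. -/

import Mathlib

/-- Generalized harmonic number `H_m^s = ∑_{k=1}^m 1/k^s`. -/
noncomputable def Hgen (s : ℝ) (m : ℕ) : ℝ := ∑ k ∈ Finset.Icc 1 m, (1 : ℝ) / (k : ℝ) ^ s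

lemma Hgen_mono (s : ℝ) {m p : ℕ} (h : m ≤ p) : Hgen s m ≤ Hgen s p := by
  apply Finset.sum_le_sum_of_subset_of_nonneg
  · exact Finset.Icc_subset_Icc_right h
  · intro k _ _
    positivity

lemma Hgen_two (s : ℝ) : Hgen s 2 = 1 + 1 / 2 ^ s := by
  have : Finset.Icc 1 2 = ({1, 2} : Finset ℕ) := by decide
  simp [Hgen, this, Real.rpow_natCast]

theorem star_ne_condition_monotone_in_i (a b l s : ℝ) (n : ℕ)
    (ha : 0 < a) (hb : 0 < b) (hl : 0 < l) (hs : 0 ≤ s) (hn : 2 ≤ n)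
    (hHa : a / Hgen s n ≤ l) (hHb : b / Hgen s n ≤ l) (hH2 : Hgen s n ≤ 2)
    (hlast : b * (((n : ℝ) - 1) / 2) * (Hgen s n - 1 - 1 / 2 ^ s) / Hgen s n +
        a * (Hgen s n - 2) / Hgen s n ≤ l * (((n : ℝ) - 1) - 1)) :
    ∀ i : ℕ, 2 ≤ i → i ≤ n - 1 →
      b * ((i : ℝ) / 2) * (Hgen s n - 1 - 1 / 2 ^ s) / Hgen s n +
        a * (Hgen s (i + 1) - 2) / Hgen s n ≤ l * ((i : ℝ) - 1) := by
  intro i hi2 hin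
  set H := Hgen s n with hH
  have h2n : Hgen s 2 ≤ H := Hgen_mono s hn
  have hpow : (0 : ℝ) < 2 ^ s := by positivity
  have hHpos : 0 < H := lt_of_lt_of_le (by positivity) ((Hgen_two s) ▸ h2n)
  have hC0 : 0 ≤ H - 1 - 1 / 2 ^ s := by
    have := Hgen_two s ▸ h2n; linarith
  have hC1 : H - 1 - 1 / 2 ^ s ≤ 1 := by
    have h1 : (0:ℝ) < 1 / (2:ℝ) ^ s := by positivity
    linarith
  have hHi : Hgen s (i + 1) ≤ H := Hgen_mono s (by omega)
  have hbH : b ≤ l * H := (div_le_iff₀ hHpos).mp hHb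
  have hi2' : (2 : ℝ) ≤ (i : ℝ) := by exact_mod_cast hi2
  rw [← add_div, div_le_iff₀ hHpos]
  nlinarith [mul_nonneg (mul_nonneg hl.le hHpos.le) hC0,
    mul_le_mul_of_nonneg_left hC1 (mul_nonneg (mul_nonneg hl.le hHpos.le) (by linarith : (0:ℝ) ≤ (i:ℝ)/2)),
    mul_le_mul_of_nonneg_right hbH (mul_nonneg (by linarith : (0:ℝ) ≤ (i:ℝ)/2) hC0),
    mul_nonneg hl.le hHpos.le, mul_pos hl hHpos]
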